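/- Let β ∈ (0,1), λ > 0, and suppose f: [r₀,∞) → ℝ satisfies |f(r)| ≤ C₁ r^{−2−β}. Define L w̄ = w̄'' + (2/r)w̄' + e(r)w̄'' + a(r)w̄' with |e(r)| ≤ C r^{−q} and |a(r)| ≤ C r^{−q−1}, q > 0, and w̄(r) = λ r^{−β}. Then there exist r₁ ≥ r₀ and λ₀ > 0 such that for all λ ≥ λ₀ and r ≥ r₁, L w̄(r) ≤ −|f(r)|. -/

import Mathlib

set_option maxHeartbeats 1000000

lemma d1 (l b r : ℝ) (hr : 0 < r) :
    deriv (fun s : ℝ => l * s ^ (-b)) r = l * (-b) * r ^ (-b - 1) := by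
  have h := (Real.hasDerivAt_rpow_const (p := -b) (Or.inl hr.ne')).const_mul l
  rw [h.deriv]; ring

lemma d2 (l b r : ℝ) (hr : 0 < r) :
    deriv (deriv (fun s : ℝ => l * s ^ (-b))) r
      = l * (-b) * (-b - 1) * r ^ (-b - 2) := by
  have hev : deriv (fun s : ℝ => l * s ^ (-b))
      =ᶠ[nhds r] fun s : ℝ => l * (-b) * s ^ (-b - 1) := by
    filter_upwards [eventually_gt_nhds hr] with s hs using d1 l b s hs
  rw [hev.deriv_eq]
  have h := (Real.hasDerivAt_rpow_const (p := -b - 1) (Or.inl hr.ne')).const_mul (l * (-b))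
  rw [h.deriv]; ring

/-- the quantitative barrier estimate of Section 4.2: for the
perturbed radial operator `L w̄ = w̄'' + (2/r)w̄' + e(r)w̄'' + a(r)w̄'` with
`|e| ≤ Cr^{−q}`, `|a| ≤ Cr^{−q−1}`, and `|f| ≤ C₁ r^{−2−β}`, the barrier
`w̄ = λ r^{−β}` satisfies `L w̄ ≤ −|f|` for all `λ ≥ λ₀` and `r ≥ r₁`. -/
theorem stmt_12 (b q C C₁ r₀ : ℝ) (hb : b ∈ Set.Ioo (0:ℝ) 1) (hq : 0 < q)
    (hC : 0 ≤ C) (hC₁ : 0 ≤ C₁) (hr₀ : 0 < r₀)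
    (f e a : ℝ → ℝ)
    (hf : ∀ r ≥ r₀, |f r| ≤ C₁ * r ^ (-2 - b))
    (he : ∀ r ≥ r₀, |e r| ≤ C * r ^ (-q))
    (ha : ∀ r ≥ r₀, |a r| ≤ C * r ^ (-q - 1)) :
    ∃ r₁ ≥ r₀, ∃ l₀ > (0:ℝ), ∀ l ≥ l₀, ∀ r ≥ r₁,
      deriv (deriv (fun s : ℝ => l * s ^ (-b))) r
        + (2 / r) * deriv (fun s : ℝ => l * s ^ (-b)) r
        + e r * deriv (deriv (fun s : ℝ => l * s ^ (-b))) r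
        + a r * deriv (fun s : ℝ => l * s ^ (-b)) r
      ≤ -|f r| := by
  obtain ⟨hb0, hb1⟩ := hb
  have hcpos : 0 < b * (1 - b) := by nlinarith
  set c : ℝ := b * (1 - b) with hc
  refine ⟨max (max r₀ 1) ((6 * C * b / c) ^ (1 / q)),
    le_trans (le_max_left r₀ 1) (le_max_left _ _), 2 * C₁ / c + 1, by positivity, ?_⟩
  intro l hl r hr
  have hr0 : r₀ ≤ r := le_trans (le_trans (le_max_left r₀ 1) (le_max_left _ _)) hr
  have hr1 : (1:ℝ) ≤ r := le_trans (le_trans (le_max_right r₀ 1) (le_max_left _ _)) hr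
  have hrp : 0 < r := by linarith
  have hlp : 0 < l := lt_of_lt_of_le (by positivity) hl
  -- r^q ≥ 6Cb/c
  have hrq : 6 * C * b / c ≤ r ^ q := by
    have h1 : (6 * C * b / c) ^ (1 / q) ≤ r := le_trans (le_max_right _ _) hr
    have h2 : ((6 * C * b / c) ^ (1 / q)) ^ q ≤ r ^ q :=
      Real.rpow_le_rpow (Real.rpow_nonneg (by positivity) _) h1 hq.le
    rwa [← Real.rpow_mul (by positivity), one_div_mul_cancel hq.ne', Real.rpow_one] at h2
  have hrqpos : 0 < r ^ q := Real.rpow_pos_of_pos hrp q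
  have hkey : 3 * C * b * r ^ (-q) ≤ c / 2 := by
    rw [Real.rpow_neg hrp.le]
    have h6 : 6 * C * b ≤ c * r ^ q := by
      have := (div_le_iff₀ hcpos).mp hrq; linarith
    have tpos : (0:ℝ) ≤ (r ^ q)⁻¹ := inv_nonneg.mpr hrqpos.le
    have hmul : 6 * C * b * (r ^ q)⁻¹ ≤ c * r ^ q * (r ^ q)⁻¹ :=
      mul_le_mul_of_nonneg_right h6 tpos
    have heq : c * r ^ q * (r ^ q)⁻¹ = c := by
      rw [mul_assoc, mul_inv_cancel₀ hrqpos.ne', mul_one]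
    linarith
  -- rewrite derivatives
  rw [d1 l b r hrp, d2 l b r hrp]
  -- powers
  have hK : 0 < r ^ (-b - 2) := Real.rpow_pos_of_pos hrp _
  have hpow1 : r ^ (-b - 1) = r ^ (-b - 2) * r := by
    rw [show (-b - 1 : ℝ) = (-b - 2) + 1 by ring, Real.rpow_add_one hrp.ne']
  have hpowq : r ^ (-q - 1) * r = r ^ (-q) := by
    rw [← Real.rpow_add_one hrp.ne', show (-q - 1 + 1 : ℝ) = -q by ring]
  -- bound the bracket G = b(b-1) + e r * b(b+1) - a r * b * r
  have hG : b * (b - 1) + e r * (b * (b + 1)) - a r * b * r ≤ -c / 2 := by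
    have he' := he r hr0
    have ha' := ha r hr0
    have h1 : e r * (b * (b + 1)) ≤ 2 * C * b * r ^ (-q) := by
      have : e r * (b * (b + 1)) ≤ |e r| * (b * (b + 1)) :=
        mul_le_mul_of_nonneg_right (le_abs_self _) (by nlinarith)
      have h2 : |e r| * (b * (b + 1)) ≤ C * r ^ (-q) * (b * (b + 1)) :=
        mul_le_mul_of_nonneg_right he' (by nlinarith)
      have h3 : C * r ^ (-q) * (b * (b + 1)) ≤ 2 * C * b * r ^ (-q) := by
        have hrqn : 0 ≤ r ^ (-q) := (Real.rpow_pos_of_pos hrp _).le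
        nlinarith [mul_nonneg (mul_nonneg (mul_nonneg hC hrqn) hb0.le)
          (by linarith : (0:ℝ) ≤ 1 - b)]
      linarith
    have h2 : -(a r * b * r) ≤ C * b * r ^ (-q) := by
      have hbr : (0:ℝ) ≤ b * r := by positivity
      have : -(a r * b * r) ≤ |a r| * b * r := by
        nlinarith [mul_le_mul_of_nonneg_right (neg_le_abs (a r)) hbr]
      have h4 : |a r| * b * r ≤ C * r ^ (-q - 1) * b * r := by
        have : 0 ≤ b * r := by positivity
        nlinarith
      have h5 : C * r ^ (-q - 1) * b * r = C * b * r ^ (-q) := by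
        rw [← hpowq]; ring
      linarith
    have : b * (b - 1) = -c := by rw [hc]; ring
    linarith
  -- assemble
  have hfactor : l * (-b) * (-b - 1) * r ^ (-b - 2) + 2 / r * (l * (-b) * r ^ (-b - 1))
      + e r * (l * (-b) * (-b - 1) * r ^ (-b - 2)) + a r * (l * (-b) * r ^ (-b - 1))
      = l * r ^ (-b - 2) * (b * (b - 1) + e r * (b * (b + 1)) - a r * b * r)
        + 2 / r * (l * (-b) * r ^ (-b - 1)) + 2 * b * l * r ^ (-b - 2) := by
    rw [hpow1]; ring
  have hdiv : 2 / r * (l * (-b) * (r ^ (-b - 2) * r)) = -(2 * b * l * r ^ (-b - 2)) := by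
    field_simp
  have hLHS : l * (-b) * (-b - 1) * r ^ (-b - 2) + 2 / r * (l * (-b) * r ^ (-b - 1))
      + e r * (l * (-b) * (-b - 1) * r ^ (-b - 2)) + a r * (l * (-b) * r ^ (-b - 1))
      = l * r ^ (-b - 2) * (b * (b - 1) + e r * (b * (b + 1)) - a r * b * r) := by
    rw [hfactor, hpow1, hdiv]; ring
  rw [hLHS]
  have step1 : l * r ^ (-b - 2) * (b * (b - 1) + e r * (b * (b + 1)) - a r * b * r)
      ≤ l * r ^ (-b - 2) * (-c / 2) :=
    mul_le_mul_of_nonneg_left hG (by positivity)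
  have step2 : l * r ^ (-b - 2) * (-c / 2) ≤ -(C₁ * r ^ (-b - 2)) := by
    have hd : 2 * C₁ / c * c = 2 * C₁ := div_mul_cancel₀ _ hcpos.ne'
    have hm := mul_le_mul_of_nonneg_right hl (by positivity : (0:ℝ) ≤ c / 2)
    have hlc : C₁ ≤ l * (c / 2) := by nlinarith [hd, hm]
    nlinarith [mul_le_mul_of_nonneg_right hlc hK.le]
  have step3 : -(C₁ * r ^ (-b - 2)) ≤ -|f r| := by
    have := hf r hr0
    rw [show (-b - 2 : ℝ) = -2 - b by ring]
    linarith
  linarith
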